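/- arXiv:2002.08876 — 2 statements merged into one kernel-verified Lean document; each statement's English description precedes it below -/
import Mathlib

section
/- Incidence properties of cells in a complex. Let K be a complex of cells in ℝ^n. Then: (a) for A, B ∈ K, if int(A) ∩ B ≠ ∅ then A ⊂ B; (b) for A, B ∈ K with dim A > dim B, int(A) ∩ B = ∅; (c) for A, B ∈ K of the same dimension, if int(A) ∩ B ≠ ∅ then A = B. -/
open MeasureTheory Metric Set Filter
open scoped ENNReal NNReal Topology BigOperators

noncomputable section

namespace Paper

/-- Euclidean space ℝ^n. -/
abbrev Vn (n : ℕ) := EuclideanSpace ℝ (Fin n)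

/-- The d-dimensional Hausdorff measure on ℝ^n. -/
abbrev HM (n d : ℕ) : Measure (Vn n) := Measure.hausdorffMeasure (d : ℝ)

/-- The scale radius `r_s(x)`; for `s = ∞` it equals the distance to the complement of `X`. -/
def scaleRadius {n : ℕ} (X : Set (Vn n)) (s : ℝ≥0∞) (x : Vn n) : ℝ≥0∞ :=
  if s = ⊤ then EMetric.infEdist x Xᶜ
  else min (s / (1 + s) * EMetric.infEdist x Xᶜ) s

/-- Real version of the scale radius, for a finite scale `t`. -/
def scaleRadiusReal {n : ℕ} (X : Set (Vn n)) (t : ℝ) (x : Vn n) : ℝ :=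
  (scaleRadius X (ENNReal.ofReal t) x).toReal

/-- `E` is relatively closed in `X`. -/
def RelClosedIn {n : ℕ} (X E : Set (Vn n)) : Prop :=
  ∃ C : Set (Vn n), IsClosed C ∧ E = C ∩ X

/-- `E` is `H^d` locally finite in `X`. -/
def HdLocallyFiniteOn (n d : ℕ) (X E : Set (Vn n)) : Prop :=
  ∀ x ∈ X, ∃ r : ℝ, 0 < r ∧ HM n d (E ∩ ball x r) < ⊤

/-- The core `E^*` of `E` in `X`: the support of `H^d ⌞ E` in `X`. -/
def core (n d : ℕ) (X E : Set (Vn n)) : Set (Vn n) :=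
  {x | x ∈ X ∧ ∀ r : ℝ, 0 < r → 0 < HM n d (E ∩ ball x r)}

/-- The support in `X` of a measure `μ`. -/
def suppIn {n : ℕ} (X : Set (Vn n)) (μ : Measure (Vn n)) : Set (Vn n) :=
  {x | x ∈ X ∧ ∀ r : ℝ, 0 < r → 0 < μ (ball x r)}

/-- A sliding deformation of `E` along the boundary `Γ` in the open set `U ⊆ X`. -/
structure IsSlidingDeformation {n : ℕ} (X Γ E U : Set (Vn n)) (f : Vn n → Vn n) : Prop where
  lipschitz : ∃ K : ℝ≥0, LipschitzOnWith K f E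
  mapsToX : ∀ x ∈ E, f x ∈ X
  homotopy : ∃ F : ℝ × Vn n → Vn n,
    ContinuousOn F (Set.Icc (0:ℝ) 1 ×ˢ E) ∧
    (∀ x ∈ E, F (0, x) = x) ∧
    (∀ x ∈ E, F (1, x) = f x) ∧
    (∀ t ∈ Set.Icc (0:ℝ) 1, ∀ x ∈ E, F (t, x) ∈ X) ∧
    (∀ t ∈ Set.Icc (0:ℝ) 1, ∀ x ∈ E ∩ Γ, F (t, x) ∈ Γ) ∧
    (∀ t ∈ Set.Icc (0:ℝ) 1, ∀ x ∈ E ∩ U, F (t, x) ∈ U) ∧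
    ∃ K : Set (Vn n), IsCompact K ∧ K ⊆ E ∩ U ∧
      ∀ t ∈ Set.Icc (0:ℝ) 1, ∀ x ∈ E \ K, F (t, x) = x

/-- A global sliding deformation in `U` is a sliding deformation of `X` itself. -/
def IsGlobalSlidingDeformation {n : ℕ} (X Γ U : Set (Vn n)) (f : Vn n → Vn n) : Prop :=
  IsSlidingDeformation X Γ X U f

/-- `E` is `(κ,h,s)`-quasiminimal with respect to the energy `I` along `Γ` in `X`. -/
def Quasiminimal {n : ℕ} (I : Measure (Vn n)) (X Γ E : Set (Vn n))
    (κ h : ℝ) (s : ℝ≥0∞) : Prop :=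
  ∀ (x : Vn n) (r : ℝ), 0 < r → ENNReal.ofReal r ≤ scaleRadius X s x → ball x r ⊆ X →
    ∀ f : Vn n → Vn n, IsSlidingDeformation X Γ E (ball x r) f →
      I {y | y ∈ E ∧ f y ≠ y} ≤
        ENNReal.ofReal κ * I (f '' {y | y ∈ E ∧ f y ≠ y}) +
        ENNReal.ofReal h * I (E ∩ ball x (h * r))

/-- Admissible energy in `X`, with comparability constant `Λ` (Definition of the paper). -/
structure AdmissibleEnergyWith {n : ℕ} (d : ℕ) (X : Set (Vn n)) (I : Measure (Vn n))
    (Λ : ℝ) : Prop where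
  one_le : 1 ≤ Λ
  le_hausdorff : ∀ A : Set (Vn n), A ⊆ X → I A ≤ ENNReal.ofReal Λ * HM n d A
  hausdorff_le : ∀ A : Set (Vn n), A ⊆ X → HM n d A ≤ ENNReal.ofReal Λ * I A
  tangentRatio : ∀ x ∈ X, ∀ W : AffineSubspace ℝ (Vn n), x ∈ W →
    Module.finrank ℝ W.direction = d →
    ∀ f : Vn n → Vn n, ContDiff ℝ 1 f → f x = x →
      (∀ v ∈ W.direction, fderiv ℝ f x v = v) →
      Tendsto (fun r : ℝ =>
          I (f '' ((W : Set (Vn n)) ∩ ball x r)) / I ((W : Set (Vn n)) ∩ ball x r))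
        (𝓝[>] 0) (𝓝 1)
  elliptic : ∀ x ∈ X, ∃ R : ℝ, 0 < R ∧ closedBall x R ⊆ X ∧ ∃ ε : ℝ → ℝ,
    (∀ r : ℝ, 0 < r → r ≤ R → 0 ≤ ε r) ∧ Tendsto ε (𝓝[>] 0) (𝓝 0) ∧
    ∀ r : ℝ, 0 < r → r ≤ R → ∀ W : AffineSubspace ℝ (Vn n), x ∈ W →
      Module.finrank ℝ W.direction = d →
      ∀ S : Set (Vn n), IsCompact S → S ⊆ closedBall x r → HM n d S < ⊤ →
        (¬ ∃ ψ : Vn n → Vn n, (∃ K : ℝ≥0, LipschitzOnWith K ψ (closedBall x r)) ∧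
            ψ '' closedBall x r ⊆ closedBall x r ∧
            (∀ y ∈ (W : Set (Vn n)) ∩ sphere x r, ψ y = y) ∧
            ψ '' S ⊆ (W : Set (Vn n)) ∩ sphere x r) →
        I ((W : Set (Vn n)) ∩ ball x r) ≤ I (S ∩ ball x r) + ENNReal.ofReal (ε r * r ^ d)

/-- Admissible energy in `X` (with an unspecified comparability constant). -/
def AdmissibleEnergy {n : ℕ} (d : ℕ) (X : Set (Vn n)) (I : Measure (Vn n)) : Prop :=
  ∃ Λ : ℝ, AdmissibleEnergyWith d X I Λ

/-- `E` is `H^d`-rectifiable: covered, up to an `H^d`-null set, by countably many Lipschitz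
images of subsets of `ℝ^d`. -/
def HdRectifiable (n d : ℕ) (E : Set (Vn n)) : Prop :=
  ∃ (f : ℕ → EuclideanSpace ℝ (Fin d) → Vn n) (A : ℕ → Set (EuclideanSpace ℝ (Fin d))),
    (∀ k, ∃ K : ℝ≥0, LipschitzOnWith K (f k) (A k)) ∧
    HM n d (E \ ⋃ k, f k '' A k) = 0

/-- Blow-up measures `(2r)^{-d} (H^d ⌞ F)(x + r(· - x))`. -/
def blowup (n d : ℕ) (F : Set (Vn n)) (x : Vn n) (r : ℝ) : Measure (Vn n) :=
  (ENNReal.ofReal (2 * r) ^ d)⁻¹ •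
    Measure.map (fun y => x + r⁻¹ • (y - x)) ((HM n d).restrict F)

/-- The linear subspace `W` is the direction of an approximate tangent `d`-plane of `F` at `x`:
the blow-up measures converge weakly to `H^d` restricted to the affine plane `x + W`. -/
def ApproxTangentAt (n d : ℕ) (F : Set (Vn n)) (x : Vn n) (W : Submodule ℝ (Vn n)) : Prop :=
  Module.finrank ℝ W = d ∧
  ∀ g : Vn n → ℝ, Continuous g → HasCompactSupport g →
    Tendsto (fun r : ℝ => ∫ y, g y ∂(blowup n d F x r)) (𝓝[>] 0)
      (𝓝 (∫ y, g y ∂((HM n d).restrict ((fun v => x + v) '' (W : Set (Vn n))))))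

/-- Weak convergence of a sequence of Radon measures, in the open set `X`. -/
def WeakTendstoIn {n : ℕ} (X : Set (Vn n)) (μ : ℕ → Measure (Vn n))
    (ν : Measure (Vn n)) : Prop :=
  ∀ g : Vn n → ℝ, Continuous g → HasCompactSupport g → tsupport g ⊆ X →
    Tendsto (fun i => ∫ y, g y ∂(μ i)) atTop (𝓝 (∫ y, g y ∂ν))

/-- Orthogonal projection onto a subspace, as a continuous linear map of the ambient space. -/
def projL {n : ℕ} (W : Submodule ℝ (Vn n)) : Vn n →L[ℝ] Vn n :=
  W.subtypeL.comp (W.orthogonalProjectionOnto)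

/-- `γ` is the Haar probability measure on the Grassmannian of `d`-planes of the subspace `W₀`
(realized as orthogonal projection operators): it is a probability measure carried by the set of
orthogonal projections onto `d`-dimensional subspaces of `W₀`, invariant under the conjugation
action of the orthogonal transformations preserving `W₀`. -/
def IsGrassHaar (n d : ℕ) (W₀ : Submodule ℝ (Vn n))
    (γ : Measure (Vn n →L[ℝ] Vn n)) : Prop :=
  IsProbabilityMeasure γ ∧
  γ {P | ¬ ∃ W : Submodule ℝ (Vn n), W ≤ W₀ ∧ Module.finrank ℝ W = d ∧ P = projL W} = 0 ∧
  ∀ g : Vn n ≃ₗᵢ[ℝ] Vn n, g '' (W₀ : Set (Vn n)) = (W₀ : Set (Vn n)) →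
    Measure.map (fun P => ((g.toContinuousLinearEquiv : Vn n →L[ℝ] Vn n).comp
        (P.comp ((g.symm.toContinuousLinearEquiv : Vn n →L[ℝ] Vn n))))) γ = γ

/-- `𝓘` is induced by a continuous integrand `i : X × G(d,n) → (0,∞)`. -/
def InducedByContinuousIntegrand {n : ℕ} (d : ℕ) (X : Set (Vn n))
    (I : Measure (Vn n)) : Prop :=
  ∃ i : Vn n × (Vn n →L[ℝ] Vn n) → ℝ,
    ContinuousOn i (X ×ˢ {P | ∃ W : Submodule ℝ (Vn n), Module.finrank ℝ W = d ∧ P = projL W}) ∧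
    (∀ p ∈ X ×ˢ {P | ∃ W : Submodule ℝ (Vn n), Module.finrank ℝ W = d ∧ P = projL W},
      0 < i p) ∧
    ∀ F : Set (Vn n), F ⊆ X → MeasurableSet F → HM n d F < ⊤ → HdRectifiable n d F →
      ∀ τ : Vn n → Submodule ℝ (Vn n),
        (∀ᵐ x ∂((HM n d).restrict F), ApproxTangentAt n d F x (τ x)) →
        I F = ∫⁻ x in F, ENNReal.ofReal (i (x, projL (τ x))) ∂(HM n d)

/-- A Lipschitz neighborhood retract of `X`. -/
def LipNbhdRetract {n : ℕ} (X Γ : Set (Vn n)) : Prop :=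
  ∃ O : Set (Vn n), IsOpen O ∧ Γ ⊆ O ∧ O ⊆ X ∧
    ∃ ρ : Vn n → Vn n, (∃ K : ℝ≥0, LipschitzOnWith K ρ O) ∧ ρ '' O ⊆ Γ ∧ ∀ x ∈ Γ, ρ x = x

/-- `Γ` is locally `C¹`-diffeomorphic to a cone. -/
def LocallyDiffeoToCone {n : ℕ} (X Γ : Set (Vn n)) : Prop :=
  ∀ x ∈ Γ, ∃ R : ℝ, 0 < R ∧ closedBall x R ⊆ X ∧
    ∃ O : Set (Vn n), IsOpen O ∧ x ∈ O ∧
    ∃ φ ψ : Vn n → Vn n,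
      ContDiffOn ℝ 1 φ (ball x R) ∧ ContDiffOn ℝ 1 ψ O ∧
      φ '' ball x R = O ∧ (∀ y ∈ ball x R, ψ (φ y) = y) ∧ (∀ z ∈ O, φ (ψ z) = z) ∧
      φ x = x ∧
      ∃ S : Set (Vn n), IsClosed S ∧ (∀ y ∈ S, ∀ t : ℝ, 0 ≤ t → x + t • (y - x) ∈ S) ∧
        φ '' (Γ ∩ ball x R) = S ∩ O

/-- A dyadic cell of the grid `𝓔_n(k)`. -/
def IsDyadicCell (n k : ℕ) (A : Set (Vn n)) : Prop :=
  ∃ (m : Fin n → ℤ) (α : Fin n → Bool),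
    A = {y : Vn n | ∀ i, y i ∈ Set.Icc ((m i : ℝ) * (2:ℝ) ^ (-(k:ℤ)))
        ((m i : ℝ) * (2:ℝ) ^ (-(k:ℤ)) + (if α i then (2:ℝ) ^ (-(k:ℤ)) else 0))}

/-- `φ` is `M`-bilipschitz on `S`. -/
def BilipschitzOnWith {n : ℕ} (M : ℝ) (φ : Vn n → Vn n) (S : Set (Vn n)) : Prop :=
  ∀ y ∈ S, ∀ z ∈ S, M⁻¹ * dist y z ≤ dist (φ y) (φ z) ∧ dist (φ y) (φ z) ≤ M * dist y z

/-- The grid axiom of Whitney subsets, with constant `M` and scale `t`. -/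
def WhitneyGridWith {n : ℕ} (X Γ : Set (Vn n)) (M t : ℝ) : Prop :=
  1 ≤ M ∧ 0 < t ∧
  ∀ x ∈ Γ, ∃ O : Set (Vn n), IsOpen O ∧
    ∃ φ : Vn n → Vn n, BilipschitzOnWith M φ (ball x (scaleRadiusReal X t x)) ∧
      φ '' ball x (scaleRadiusReal X t x) = O ∧
      ∃ k : ℕ, M⁻¹ * scaleRadiusReal X t x ≤ (2:ℝ) ^ (-(k:ℤ)) ∧
        ∃ S : Set (Set (Vn n)), (∀ A ∈ S, IsDyadicCell n k A) ∧
          φ '' (Γ ∩ ball x (scaleRadiusReal X t x)) = O ∩ ⋃₀ S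

/-- A Whitney subset of `X`, with explicit constants `M`, `t`. -/
def WhitneySubsetWith {n : ℕ} (X Γ : Set (Vn n)) (M t : ℝ) : Prop :=
  RelClosedIn X Γ ∧ LipNbhdRetract X Γ ∧ LocallyDiffeoToCone X Γ ∧ WhitneyGridWith X Γ M t

/-- A Whitney subset of `X`. -/
def WhitneySubset {n : ℕ} (X Γ : Set (Vn n)) : Prop :=
  ∃ M t : ℝ, WhitneySubsetWith X Γ M t

/-! Cells, complexes and charts. -/

/-- The reference cells `∏ [0, α_i]`, `α ∈ {-1,0,1}^n`, of the canonical `n`-complex `E_n`. -/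
def refCell (n : ℕ) (α : Fin n → Fin 3) : Set (Vn n) :=
  {y | ∀ i, y i ∈ Set.Icc (min 0 (![(-1:ℝ), 0, 1] (α i))) (max 0 (![(-1:ℝ), 0, 1] (α i)))}

/-- A similarity of `ℝ^n`. -/
def IsSimilarity {n : ℕ} (f : Vn n → Vn n) : Prop :=
  ∃ r : ℝ, 0 < r ∧ ∀ x y, dist (f x) (f y) = r * dist x y

/-- A cell of `ℝ^n`: a face of a cube, i.e. the image of a reference cell under a similarity. -/
def IsCell (n : ℕ) (A : Set (Vn n)) : Prop :=
  ∃ (f : Vn n → Vn n) (α : Fin n → Fin 3), IsSimilarity f ∧ A = f '' refCell n α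

/-- Interior of a cell relative to its affine span. -/
def cellInt {n : ℕ} (A : Set (Vn n)) : Set (Vn n) :=
  {x | x ∈ A ∧ ∃ ε : ℝ, 0 < ε ∧ ∀ y ∈ (affineSpan ℝ A : Set (Vn n)), dist y x < ε → y ∈ A}

/-- Boundary of a cell relative to its affine span. -/
def cellBry {n : ℕ} (A : Set (Vn n)) : Set (Vn n) := A \ cellInt A

/-- Dimension of a cell: the dimension of its affine span. -/
def cellDim {n : ℕ} (A : Set (Vn n)) : ℕ :=
  Module.finrank ℝ (affineSpan ℝ A).direction

/-- A complex of cells. -/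
def IsComplex {n : ℕ} (K : Set (Set (Vn n))) : Prop :=
  (∀ A ∈ K, IsCell n A) ∧
  (∀ A ∈ K, ∀ B ∈ K, A ≠ B → cellInt A ∩ cellInt B = ∅) ∧
  (∀ x ∈ ⋃₀ K, ∃ U : Set (Vn n), IsOpen U ∧ x ∈ U ∧ {A ∈ K | (A ∩ U).Nonempty}.Finite) ∧
  (∀ A ∈ K, ∃ U : Set (Vn n), IsOpen U ∧ cellInt A ⊆ U ∧
      U ∩ ⋃₀ K ⊆ ⋃ B ∈ {B ∈ K | A ⊆ B}, cellInt B)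

/-- The set `V_A = ⋃ {int B | B ∈ K, A ⊆ B}`. -/
def cellNbhd {n : ℕ} (K : Set (Set (Vn n))) (A : Set (Vn n)) : Set (Vn n) :=
  ⋃ B ∈ {B ∈ K | A ⊆ B}, cellInt B

/-- An `n`-chart: the image of the canonical `n`-complex `E_n` under a similarity. -/
def IsChart {n : ℕ} (K : Set (Set (Vn n))) : Prop :=
  ∃ f : Vn n → Vn n, IsSimilarity f ∧ K = {A | ∃ α : Fin n → Fin 3, A = f '' refCell n α}

/-- A system of `n`-charts. -/
def IsChartSystem {n : ℕ} {ι : Type} (K : ι → Set (Set (Vn n))) : Prop :=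
  (∀ a, IsChart (K a)) ∧
  (∀ A ∈ ⋃ a, K a, ∀ B ∈ ⋃ a, K a, (cellInt A ∩ cellInt B).Nonempty →
      cellInt A ⊆ cellInt B ∨ cellInt B ⊆ cellInt A) ∧
  (∀ x ∈ ⋃ a, ⋃₀ (K a), ∃ U : Set (Vn n), IsOpen U ∧ x ∈ U ∧
      ∃ S : Set (Set (Vn n)), S.Finite ∧ S ⊆ ⋃ a, K a ∧
        ∀ A ∈ ⋃ a, K a, (A ∩ (U ∩ ⋃ a, ⋃₀ (K a))).Nonempty →
          ∃ B ∈ S, cellInt A ⊆ cellInt B)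

/-- The limit of a system of `n`-charts: the collection of its maximal cells. -/
def systemLimit {n : ℕ} {ι : Type} (K : ι → Set (Set (Vn n))) : Set (Set (Vn n)) :=
  {A | A ∈ ⋃ a, K a ∧ ∀ B ∈ ⋃ a, K a, (cellInt A ∩ cellInt B).Nonempty → cellInt B ⊆ cellInt A}

/-- An `n`-complex: the limit of a system of `n`-charts. -/
def IsNComplex {n : ℕ} (K : Set (Set (Vn n))) : Prop :=
  ∃ (ι : Type) (Kα : ι → Set (Set (Vn n))), IsChartSystem Kα ∧ K = systemLimit Kα

/-- A subcomplex of `K`. -/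
def IsSubcomplex {n : ℕ} (K L : Set (Set (Vn n))) : Prop :=
  L ⊆ K ∧ ∀ A ∈ L, ∀ B ∈ K, A ⊆ B → B ∈ L

/-- The rigid open set `U(L)` induced by a set of cells. -/
def rigidOpen {n : ℕ} (L : Set (Set (Vn n))) : Set (Vn n) :=
  ⋃ A ∈ L, cellInt A

/-- `φ` is locally Lipschitz on `S`. -/
def LocallyLipschitzOn {n : ℕ} (S : Set (Vn n)) (φ : Vn n → Vn n) : Prop :=
  ∀ x ∈ S, ∃ U : Set (Vn n), IsOpen U ∧ x ∈ U ∧ ∃ c : ℝ≥0, LipschitzOnWith c φ (U ∩ S)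

/-- The union of interiors of cells of dimension `> d`. -/
def highSkel {n : ℕ} (K : Set (Set (Vn n))) (d : ℕ) : Set (Vn n) :=
  ⋃ A ∈ {A ∈ K | d < cellDim A}, cellInt A

/-- Upper Lebesgue integral (infimum of integrals of measurable majorants). -/
def upperLintegral {α : Type*} [MeasurableSpace α] (μ : Measure α) (s : Set α)
    (f : α → ℝ≥0∞) : ℝ≥0∞ :=
  ⨅ (g : α → ℝ≥0∞) (_ : Measurable g) (_ : ∀ x, f x ≤ g x), ∫⁻ x in s, g x ∂μ

/-- The norm of a linear map restricted to a subset `S`. -/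
def opNormOn {n : ℕ} (u : Vn n →L[ℝ] Vn n) (S : Set (Vn n)) : ℝ :=
  sSup ((fun x => ‖u x‖) '' {x ∈ S | ‖x‖ ≤ 1})


lemma refCell_convex (n : ℕ) (α : Fin n → Fin 3) : Convex ℝ (refCell n α) := by
  have : refCell n α = ⋂ i, (EuclideanSpace.proj i : Vn n →L[ℝ] ℝ) ⁻¹'
      Set.Icc (min 0 (![(-1:ℝ), 0, 1] (α i))) (max 0 (![(-1:ℝ), 0, 1] (α i))) := by
    ext y; simp [refCell, EuclideanSpace.proj]
  rw [this]
  exact convex_iInter fun i => (convex_Icc _ _).linear_preimage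
    ((EuclideanSpace.proj i : Vn n →L[ℝ] ℝ) : Vn n →ₗ[ℝ] ℝ)

lemma refCell_nonempty (n : ℕ) (α : Fin n → Fin 3) : (refCell n α).Nonempty :=
  ⟨0, fun i => by simp [min_le_iff, le_max_iff]⟩

lemma similarity_affine {n : ℕ} {f : Vn n → Vn n} (hf : IsSimilarity f) :
    ∃ g : Vn n →ᵃ[ℝ] Vn n, ⇑g = f := by
  obtain ⟨r, hr, hd⟩ := hf
  have hiso : Isometry (fun x => r⁻¹ • f x : Vn n → Vn n) := by
    refine Isometry.of_dist_eq fun x y => ?_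
    rw [dist_smul₀, hd, Real.norm_eq_abs, abs_of_pos (inv_pos.2 hr)]
    field_simp
  set g := hiso.affineIsometryOfStrictConvexSpace with hg
  refine ⟨((r • LinearMap.id : Vn n →ₗ[ℝ] Vn n).toAffineMap).comp g.toAffineMap, ?_⟩
  funext x
  have : g x = r⁻¹ • f x := by rw [hg]; rfl
  simp [this, smul_smul, inv_mul_cancel₀ hr.ne', mul_inv_cancel₀ hr.ne']

lemma cellInt_eq_intrinsic {n : ℕ} (A : Set (Vn n)) :
    cellInt A = intrinsicInterior ℝ A := by
  ext x
  constructor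
  · rintro ⟨hxA, ε, hε, hb⟩
    have hxs : x ∈ affineSpan ℝ A := subset_affineSpan ℝ A hxA
    refine mem_intrinsicInterior.2 ⟨⟨x, hxs⟩, ?_, rfl⟩
    rw [mem_interior_iff_mem_nhds, Metric.mem_nhds_iff]
    refine ⟨ε, hε, fun y hy => ?_⟩
    exact hb y y.2 (by simpa [Subtype.dist_eq] using hy)
  · intro hx
    obtain ⟨y, hy, rfl⟩ := mem_intrinsicInterior.1 hx
    have hyA : (y : Vn n) ∈ A := interior_subset (s := (Subtype.val ⁻¹' A : Set (affineSpan ℝ A))) hy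
    rw [mem_interior_iff_mem_nhds, Metric.mem_nhds_iff] at hy
    obtain ⟨ε, hε, hb⟩ := hy
    refine ⟨hyA, ε, hε, fun z hz hd => ?_⟩
    have : (⟨z, hz⟩ : affineSpan ℝ A) ∈ Metric.ball y ε := by
      simpa [Metric.mem_ball, Subtype.dist_eq] using hd
    exact hb this

lemma cell_convex {n : ℕ} {A : Set (Vn n)} (hA : IsCell n A) : Convex ℝ A := by
  obtain ⟨f, α, hf, rfl⟩ := hA
  obtain ⟨g, rfl⟩ := similarity_affine hf
  exact (refCell_convex n α).affine_image g

lemma cell_nonempty {n : ℕ} {A : Set (Vn n)} (hA : IsCell n A) : A.Nonempty := by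
  obtain ⟨f, α, hf, rfl⟩ := hA
  exact (refCell_nonempty n α).image f

lemma cellInt_nonempty {n : ℕ} {A : Set (Vn n)} (hA : IsCell n A) : (cellInt A).Nonempty := by
  rw [cellInt_eq_intrinsic]
  exact (cell_nonempty hA).intrinsicInterior (cell_convex hA)

lemma combo_mem_cellInt {n : ℕ} {B : Set (Vn n)} (hB : Convex ℝ B) {x z : Vn n}
    (hx : x ∈ B) (hz : z ∈ cellInt B) {t : ℝ} (ht : 0 < t) (ht1 : t ≤ 1) :
    (1 - t) • x + t • z ∈ cellInt B := by
  obtain ⟨hzB, ε, hε, hb⟩ := hz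
  set w := (1 - t) • x + t • z with hw
  have hwB : w ∈ B := hB hx hzB (by linarith) ht.le (by ring)
  have hxs : x ∈ affineSpan ℝ B := subset_affineSpan ℝ B hx
  have hzs : z ∈ affineSpan ℝ B := subset_affineSpan ℝ B hzB
  have hws : w ∈ affineSpan ℝ B := by
    have h := AffineSubspace.smul_vsub_vadd_mem (affineSpan ℝ B) t hzs hxs hxs
    have he : t • (z -ᵥ x) +ᵥ x = w := by
      simp only [vsub_eq_sub, vadd_eq_add, smul_sub, hw]; module
    rwa [he] at h
  refine ⟨hwB, t * ε, mul_pos ht hε, fun y hy hd => ?_⟩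
  set z' := z + t⁻¹ • (y - w) with hz'
  have hz's : z' ∈ affineSpan ℝ B := by
    have h := AffineSubspace.smul_vsub_vadd_mem (affineSpan ℝ B) t⁻¹ hy hws hzs
    have he : t⁻¹ • (y -ᵥ w) +ᵥ z = z' := by
      simp only [vsub_eq_sub, vadd_eq_add, hz']; ring_nf; abel
    rwa [he] at h
  have hdz : dist z' z < ε := by
    have heq : dist z' z = t⁻¹ * dist y w := by
      rw [hz', dist_eq_norm]
      simp only [add_sub_cancel_left, norm_smul, Real.norm_eq_abs,
        abs_of_pos (inv_pos.2 ht)]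
      rw [dist_eq_norm]
    rw [heq]
    calc t⁻¹ * dist y w < t⁻¹ * (t * ε) := by
          exact mul_lt_mul_of_pos_left hd (inv_pos.2 ht)
      _ = ε := by field_simp
  have hz'B : z' ∈ B := hb z' hz's hdz
  have htt : t • (t⁻¹ • (y - w)) = y - w := by
    rw [smul_smul, mul_inv_cancel₀ ht.ne', one_smul]
  have hy' : (1 - t) • x + t • z' = y := by
    calc (1 - t) • x + t • z' = ((1 - t) • x + t • z) + (y - w) := by
          rw [hz', smul_add, htt]; abel
      _ = y := by rw [← hw]; abel
  rw [← hy']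
  exact hB hx hz'B (by linarith) ht.le (by ring)

lemma cellDim_mono {n : ℕ} {A B : Set (Vn n)} (h : A ⊆ B) : cellDim A ≤ cellDim B :=
  Submodule.finrank_mono (AffineSubspace.direction_le (affineSpan_mono ℝ h))


/-- **Incidence properties of cells in a complex.** -/
theorem complex_incidence (n : ℕ) (K : Set (Set (Vn n))) (hK : IsComplex K) :
    (∀ A ∈ K, ∀ B ∈ K, (cellInt A ∩ B).Nonempty → A ⊆ B) ∧
    (∀ A ∈ K, ∀ B ∈ K, cellDim B < cellDim A → cellInt A ∩ B = ∅) ∧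
    (∀ A ∈ K, ∀ B ∈ K, cellDim A = cellDim B → (cellInt A ∩ B).Nonempty → A = B) := by
  obtain ⟨hcell, hdisj, hlf, hnbhd⟩ := hK
  have parta : ∀ A ∈ K, ∀ B ∈ K, (cellInt A ∩ B).Nonempty → A ⊆ B := by
    intro A hA B hB ⟨x, hxA, hxB⟩
    obtain ⟨U, hUo, hUA, hUsub⟩ := hnbhd A hA
    obtain ⟨z, hz⟩ := cellInt_nonempty (hcell B hB)
    have hxU : x ∈ U := hUA hxA
    obtain ⟨ε, hε, hball⟩ := Metric.isOpen_iff.1 hUo x hxU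
    -- choose small t
    set t : ℝ := min 1 (ε / (2 * (dist z x + 1))) with htdef
    have hzx : (0:ℝ) < dist z x + 1 := by positivity
    have ht : 0 < t := lt_min one_pos (by positivity)
    have ht1 : t ≤ 1 := min_le_left _ _
    set w : Vn n := (1 - t) • x + t • z with hwdef
    have hwB : w ∈ cellInt B := combo_mem_cellInt (cell_convex (hcell B hB)) hxB hz ht ht1
    have hwU : w ∈ U := by
      apply hball
      have : w - x = t • (z - x) := by rw [hwdef]; module
      have hdw : dist w x = t * dist z x := by
        rw [dist_eq_norm, this, norm_smul, Real.norm_eq_abs, abs_of_pos ht, dist_eq_norm]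
      rw [Metric.mem_ball, hdw]
      calc t * dist z x ≤ (ε / (2 * (dist z x + 1))) * dist z x := by
            apply mul_le_mul_of_nonneg_right (min_le_right _ _) dist_nonneg
        _ < ε := by
            rw [div_mul_eq_mul_div, div_lt_iff₀ (by positivity)]
            nlinarith [dist_nonneg (x := z) (y := x), hε]
    have hwK : w ∈ ⋃₀ K := ⟨B, hB, hwB.1⟩
    have := hUsub ⟨hwU, hwK⟩
    simp only [Set.mem_iUnion, Set.mem_setOf_eq] at this
    obtain ⟨C, ⟨⟨hC, hAC⟩, hwC⟩⟩ := this
    rcases eq_or_ne C B with rfl | hne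
    · exact hAC
    · exact absurd (Set.eq_empty_iff_forall_notMem.1 (hdisj C hC B hB hne) w ⟨hwC, hwB⟩)
        (by simp)
  refine ⟨parta, ?_, ?_⟩
  · intro A hA B hB hdim
    by_contra h
    obtain ⟨x, hx⟩ := Set.nonempty_iff_ne_empty.2 h
    exact absurd (cellDim_mono (parta A hA B hB ⟨x, hx⟩)) (by omega)
  · intro A hA B hB hdim ⟨x, hxA, hxB⟩
    have hAB : A ⊆ B := parta A hA B hB ⟨x, hxA, hxB⟩
    have hle : affineSpan ℝ A ≤ affineSpan ℝ B := affineSpan_mono ℝ hAB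
    have hdir : (affineSpan ℝ A).direction = (affineSpan ℝ B).direction :=
      Submodule.eq_of_le_of_finrank_eq (AffineSubspace.direction_le hle) hdim
    have hspan : affineSpan ℝ A = affineSpan ℝ B := by
      apply AffineSubspace.ext_of_direction_eq hdir
      exact ⟨x, subset_affineSpan ℝ A hxA.1, hle (subset_affineSpan ℝ A hxA.1)⟩
    by_contra hne
    obtain ⟨hxA', ε, hε, hb⟩ := id hxA
    have hxintB : x ∈ cellInt B :=
      ⟨hAB hxA', ε, hε, fun y hy hd => hAB (hb y (by rw [hspan]; exact hy) hd)⟩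
    exact absurd (Set.eq_empty_iff_forall_notMem.1 (hdisj A hA B hB hne) x ⟨hxA, hxintB⟩)
      (by simp)

end Paper
end
end

section
/- Properties of the limit of a system of n-charts. Let (K_α) be a system of n-charts in ℝ^n and let K be its limit, the collection of maximal cells of the system. Then K is a complex with |K| = ⋃_α |K_α|, and every cell A ∈ ⋃_α K_α satisfies int(A) ⊂ int(B) for some B ∈ K. Moreover: (i) for every A ∈ K, the set V_A = ⋃{int(B) : B ∈ K, A ⊂ B} is open in ℝ^n; (ii) there exists a constant κ ≥ 1 depending only on n such that for every A ∈ K of dimension ≥ 1 the set {x ∈ ℝ^n : dist(x, A) < κ^{-1} dist(x, ∂A)} is contained in V_A; (iii) every cell A ∈ K is contained in at most 3^n cells B ∈ K. -/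
open MeasureTheory Metric Set Filter
open scoped ENNReal NNReal Topology BigOperators

noncomputable section

namespace Paper

/-! ### Auxiliary lemmas for `system_limit_properties` -/

section SystemLimitAux

local notation "vv" => (![(-1:ℝ), 0, 1] : Fin 3 → ℝ)

/-- The relatively open piece of the interval attached to `a : Fin 3`. -/
def cIntP (a : Fin 3) : Set ℝ :=
  if a = 1 then {0} else Set.Ioo (min 0 (vv a)) (max 0 (vv a))

/-- The relative interior of a reference cell. -/
def RintP (n : ℕ) (α : Fin n → Fin 3) : Set (Vn n) := {y | ∀ i, y i ∈ cIntP (α i)}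

lemma fin3_ne_one {a : Fin 3} (h : a ≠ 1) : a = 0 ∨ a = 2 := by omega

lemma mem_refCell {n : ℕ} {α : Fin n → Fin 3} {y : Vn n} :
    y ∈ refCell n α ↔ ∀ i, y i ∈ Set.Icc (min 0 (vv (α i))) (max 0 (vv (α i))) := Iff.rfl

lemma zero_mem_IccP (a : Fin 3) : (0:ℝ) ∈ Set.Icc (min 0 (vv a)) (max 0 (vv a)) :=
  ⟨min_le_left _ _, le_max_left _ _⟩

lemma vv_mem_IccP (a : Fin 3) : vv a ∈ Set.Icc (min 0 (vv a)) (max 0 (vv a)) :=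
  ⟨min_le_right _ _, le_max_right _ _⟩

lemma IccP_one {x : ℝ} : x ∈ Set.Icc (min 0 (vv 1)) (max 0 (vv 1)) ↔ x = 0 := by
  norm_num

lemma cIntP_one : cIntP 1 = {0} := by simp [cIntP]

lemma cIntP_zero : cIntP 0 = Set.Ioo (-1) 0 := by norm_num [cIntP]

lemma vv_two' : vv 2 = 1 := rfl

lemma cIntP_two : cIntP 2 = Set.Ioo 0 1 := by
  rw [cIntP, if_neg (by decide : ¬(2:Fin 3) = 1)]; norm_num [vv_two']

lemma IccP_zero : Set.Icc (min 0 (vv 0)) (max 0 (vv 0)) = Set.Icc (-1) 0 := by norm_num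

lemma IccP_two : Set.Icc (min 0 (vv 2)) (max 0 (vv 2)) = Set.Icc 0 1 := by norm_num [vv_two']

lemma cIntP_subset_IccP (a : Fin 3) :
    cIntP a ⊆ Set.Icc (min 0 (vv a)) (max 0 (vv a)) := by
  intro x hx
  by_cases h : a = 1
  · subst h; rw [cIntP_one] at hx; rw [IccP_one]; exact hx
  · simp only [cIntP, if_neg h] at hx; exact Set.Ioo_subset_Icc_self hx

lemma abs_le_one_of_mem_IccP {a : Fin 3} {x : ℝ}
    (h : x ∈ Set.Icc (min 0 (vv a)) (max 0 (vv a))) : |x| ≤ 1 := by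
  by_cases ha : a = 1
  · subst ha; rw [IccP_one] at h; simp [h]
  · rcases fin3_ne_one ha with rfl | rfl
    · rw [IccP_zero] at h; rw [abs_le]; exact ⟨h.1, by linarith [h.2]⟩
    · rw [IccP_two] at h; rw [abs_le]; exact ⟨by linarith [h.1], h.2⟩

lemma half_mem_cIntP (a : Fin 3) : vv a / 2 ∈ cIntP a := by
  by_cases ha : a = 1
  · subst ha; rw [cIntP_one]; norm_num
  · rcases fin3_ne_one ha with rfl | rfl
    · rw [cIntP_zero]; norm_num
    · rw [cIntP_two]; norm_num [vv_two']

lemma cIntP_ne_one {a : Fin 3} (h : a ≠ 1) :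
    cIntP a = Set.Ioo (min 0 (vv a)) (max 0 (vv a)) := by simp [cIntP, h]

lemma abs_bounds_of_mem_cIntP {a : Fin 3} (h : a ≠ 1) {x : ℝ} (hx : x ∈ cIntP a) :
    0 < |x| ∧ |x| < 1 := by
  rcases fin3_ne_one h with rfl | rfl
  · rw [cIntP_zero] at hx
    exact ⟨abs_pos.2 (ne_of_lt hx.2), abs_lt.2 ⟨by linarith [hx.1], by linarith [hx.2]⟩⟩
  · rw [cIntP_two] at hx
    exact ⟨abs_pos.2 (ne_of_gt hx.1), abs_lt.2 ⟨by linarith [hx.1], hx.2⟩⟩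

lemma zero_not_mem_cIntP {a : Fin 3} (h : a ≠ 1) : (0:ℝ) ∉ cIntP a := by
  intro hx; simpa using (abs_bounds_of_mem_cIntP h hx).1

lemma vv_not_mem_cIntP {a : Fin 3} (h : a ≠ 1) : vv a ∉ cIntP a := by
  rcases fin3_ne_one h with rfl | rfl
  · rw [cIntP_zero]; norm_num
  · rw [cIntP_two]; norm_num [vv_two']

lemma abs_sub_vv_of_mem_cIntP {a : Fin 3} (h : a ≠ 1) {x : ℝ} (hx : x ∈ cIntP a) :
    |x - vv a| = 1 - |x| := by
  rcases fin3_ne_one h with rfl | rfl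
  · rw [cIntP_zero] at hx
    have h1 : |x - vv 0| = x + 1 := by rw [abs_of_nonneg (by norm_num; linarith [hx.1])]; norm_num
    rw [h1, abs_of_neg hx.2]; ring
  · rw [cIntP_two] at hx
    have h1 : |x - vv 2| = 1 - x := by rw [abs_of_nonpos (by norm_num [vv_two']; linarith [hx.2])]; norm_num [vv_two']
    rw [h1, abs_of_pos hx.1]

/-- Sign selector used in the ball lemma. -/
def betaSel (z : ℝ) : Fin 3 := if z < 0 then 0 else if 0 < z then 2 else 1

lemma betaSel_eq {a : Fin 3} (h : a ≠ 1) {p z : ℝ} (hp : p ∈ cIntP a)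
    (hz : |z - p| < |p|) : betaSel z = a := by
  rcases fin3_ne_one h with rfl | rfl
  · rw [cIntP_zero] at hp
    have : z < 0 := by rw [abs_of_neg hp.2, abs_lt] at hz; linarith [hz.2]
    simp [betaSel, this]
  · rw [cIntP_two] at hp
    have h0 : 0 < z := by rw [abs_of_pos hp.1, abs_lt] at hz; linarith [hz.1]
    simp [betaSel, h0, asymm h0]

lemma mem_cIntP_betaSel {z : ℝ} (hz : |z| < 1) : z ∈ cIntP (betaSel z) := by
  rcases lt_trichotomy z 0 with h | h | h
  · have : betaSel z = 0 := by simp [betaSel, h]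
    rw [this, cIntP_zero]; rw [abs_of_neg h] at hz; exact ⟨by linarith, h⟩
  · have : betaSel z = 1 := by simp [betaSel, h]
    rw [this, cIntP_one]; exact h
  · have : betaSel z = 2 := by simp [betaSel, asymm h, h]
    rw [this, cIntP_two]; rw [abs_of_pos h] at hz; exact ⟨h, hz⟩

lemma IccP_subset_of_one {a b : Fin 3} (ha : a = 1) :
    Set.Icc (min 0 (vv a)) (max 0 (vv a)) ⊆ Set.Icc (min 0 (vv b)) (max 0 (vv b)) := by
  subst ha; intro x hx; rw [IccP_one] at hx; subst hx; exact zero_mem_IccP b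

end SystemLimitAux
section SystemLimitAuxB

local notation "vv" => (![(-1:ℝ), 0, 1] : Fin 3 → ℝ)

lemma single_smul' {n : ℕ} (i : Fin n) (c : ℝ) :
    EuclideanSpace.single i c = c • EuclideanSpace.single i (1:ℝ) := by
  ext j; by_cases h : j = i <;> simp [EuclideanSpace.single_apply, h]

lemma sum_single' {n : ℕ} (y : Vn n) : y = ∑ i, EuclideanSpace.single i (y i) := by
  have h := (EuclideanSpace.basisFun (Fin n) ℝ).sum_repr y
  simp only [EuclideanSpace.basisFun_repr, EuclideanSpace.basisFun_apply] at h
  calc y = ∑ i, y i • EuclideanSpace.single i (1:ℝ) := h.symm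
  _ = ∑ i, EuclideanSpace.single i (y i) :=
    Finset.sum_congr rfl (fun i _ => (single_smul' i (y i)).symm)

lemma coord_dist_le {n : ℕ} (y z : Vn n) (i : Fin n) : dist (y i) (z i) ≤ dist y z := by
  rw [EuclideanSpace.dist_eq]
  have h1 : dist (y i) (z i) = Real.sqrt (dist (y i) (z i)^2) := by
    rw [Real.sqrt_sq dist_nonneg]
  rw [h1]
  apply Real.sqrt_le_sqrt
  exact Finset.single_le_sum (f := fun j => dist (y j) (z j)^2) (fun j _ => sq_nonneg _)
    (Finset.mem_univ i)

lemma coord_abs_sub_le {n : ℕ} (y z : Vn n) (i : Fin n) : |y i - z i| ≤ dist y z := by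
  rw [← Real.dist_eq]; exact coord_dist_le y z i

lemma upd_dist {n : ℕ} (p : Vn n) (i : Fin n) (c : ℝ) :
    dist p (WithLp.toLp 2 (Function.update p i c)) = |p i - c| := by
  rw [EuclideanSpace.dist_eq, Finset.sum_eq_single i]
  · simp [Function.update_self, Real.sqrt_sq_eq_abs, Real.dist_eq]
  · intro j _ hj; simp [Function.update_of_ne, hj]
  · simp

/-- The coordinate subspace spanned by a reference cell. -/
def Wsub (n : ℕ) (α : Fin n → Fin 3) : Submodule ℝ (Vn n) where
  carrier := {y | ∀ i, α i = 1 → y i = 0}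
  add_mem' := by
    intro a b ha hb i hi
    have : (a + b) i = a i + b i := rfl
    rw [this, ha i hi, hb i hi, add_zero]
  zero_mem' := fun i _ => rfl
  smul_mem' := by
    intro c a ha i hi
    have : (c • a) i = c * a i := rfl
    rw [this, ha i hi, mul_zero]

lemma mem_Wsub {n : ℕ} {α : Fin n → Fin 3} {y : Vn n} :
    y ∈ Wsub n α ↔ ∀ i, α i = 1 → y i = 0 := Iff.rfl

lemma refCell_subset_Wsub {n : ℕ} (α : Fin n → Fin 3) :
    refCell n α ⊆ (Wsub n α : Set (Vn n)) := by
  intro y hy i hi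
  have := hy i; rw [hi, IccP_one] at this; exact this

lemma zero_mem_refCell {n : ℕ} (α : Fin n → Fin 3) : (0 : Vn n) ∈ refCell n α :=
  fun i => zero_mem_IccP (α i)

lemma single_vv_mem_refCell {n : ℕ} (α : Fin n → Fin 3) (i : Fin n) :
    EuclideanSpace.single i (vv (α i)) ∈ refCell n α := by
  intro j
  by_cases h : j = i
  · subst h; rw [EuclideanSpace.single_apply, if_pos rfl]; exact vv_mem_IccP _
  · rw [EuclideanSpace.single_apply, if_neg h]; exact zero_mem_IccP _

/-- The affine span of a reference cell is the corresponding coordinate subspace. -/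
lemma span_refCell {n : ℕ} (α : Fin n → Fin 3) :
    (affineSpan ℝ (refCell n α) : Set (Vn n)) = (Wsub n α : Set (Vn n)) := by
  have h0 : insert (0 : Vn n) (refCell n α) = refCell n α :=
    Set.insert_eq_self.2 (zero_mem_refCell α)
  have hspan : (affineSpan ℝ (refCell n α) : Set (Vn n))
      = (Submodule.span ℝ (refCell n α) : Set (Vn n)) := by
    rw [← h0, affineSpan_insert_zero, Submodule.span_insert_zero]
  rw [hspan]
  apply le_antisymm
  · exact Submodule.span_le.2 (refCell_subset_Wsub α)
  · intro y hy
    rw [sum_single' y]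
    apply Submodule.sum_mem
    intro i _
    by_cases hi : α i = 1
    · have : y i = 0 := hy i hi
      rw [this]
      have : EuclideanSpace.single i (0:ℝ) = 0 := by
        ext j; simp [EuclideanSpace.single_apply]
      rw [this]; exact Submodule.zero_mem _
    · have hv : vv (α i) ≠ 0 := by
        rcases fin3_ne_one hi with h | h <;> rw [h] <;> norm_num [vv_two']
      have : EuclideanSpace.single i (y i)
          = (y i / vv (α i)) • EuclideanSpace.single i (vv (α i)) := by
        ext j; by_cases h : j = i <;>
          simp [EuclideanSpace.single_apply, h, div_mul_cancel₀, hv]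
      rw [this]
      exact Submodule.smul_mem _ _ (Submodule.subset_span (single_vv_mem_refCell α i))

end SystemLimitAuxB
section SystemLimitAuxC

local notation "vv" => (![(-1:ℝ), 0, 1] : Fin 3 → ℝ)

/-- The relative interior of a reference cell is the product of the open pieces. -/
lemma cellInt_refCell {n : ℕ} (α : Fin n → Fin 3) :
    cellInt (refCell n α) = RintP n α := by
  ext x
  constructor
  · rintro ⟨hx, ε, hε, hb⟩
    intro i
    by_cases hi : α i = 1
    · have := hx i; rw [hi, IccP_one] at this
      rw [hi, cIntP_one]; exact this
    · rw [cIntP_ne_one hi]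
      have hxi := hx i
      have wmem : ∀ c : ℝ, (x + c • EuclideanSpace.single i (1:ℝ))
          ∈ (affineSpan ℝ (refCell n α) : Set (Vn n)) := by
        intro c
        rw [span_refCell]
        intro j hj
        have hji : j ≠ i := fun h => hi (h ▸ hj)
        have hx0 : x j = 0 := refCell_subset_Wsub α hx j hj
        have : (x + c • EuclideanSpace.single i (1:ℝ)) j
            = x j + c * EuclideanSpace.single i (1:ℝ) j := rfl
        rw [this, hx0, EuclideanSpace.single_apply, if_neg hji]; ring
      have hdd : ∀ c : ℝ, dist (x + c • EuclideanSpace.single i (1:ℝ)) x = |c| := by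
        intro c
        rw [dist_eq_norm]
        have : x + c • EuclideanSpace.single i (1:ℝ) - x
            = c • EuclideanSpace.single i (1:ℝ) := by abel
        rw [this, norm_smul, EuclideanSpace.norm_single]
        simp
      have happ : ∀ c : ℝ, (x + c • EuclideanSpace.single i (1:ℝ)) i = x i + c := by
        intro c
        have : (x + c • EuclideanSpace.single i (1:ℝ)) i
            = x i + c * EuclideanSpace.single i (1:ℝ) i := rfl
        rw [this, EuclideanSpace.single_apply, if_pos rfl, mul_one]
      constructor
      · by_contra hlt
        have hxe : x i = min 0 (vv (α i)) := le_antisymm (not_lt.1 hlt) hxi.1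
        have hy := hb _ (wmem (-(ε/2))) (by rw [hdd]; rw [abs_neg, abs_of_pos (by linarith)]; linarith)
        have := (hy i).1
        rw [happ, hxe] at this
        linarith
      · by_contra hlt
        have hxe : x i = max 0 (vv (α i)) := le_antisymm hxi.2 (not_lt.1 hlt)
        have hy := hb _ (wmem (ε/2)) (by rw [hdd, abs_of_pos (by linarith)]; linarith)
        have := (hy i).2
        rw [happ, hxe] at this
        linarith
  · intro hx
    have hxr : x ∈ refCell n α := fun i => cIntP_subset_IccP (α i) (hx i)
    refine ⟨hxr, ?_⟩
    by_cases hn : Nonempty (Fin n)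
    · set g : Fin n → ℝ := fun i => if α i = 1 then 1
        else min (x i - min 0 (vv (α i))) (max 0 (vv (α i)) - x i) with hg
      have hgpos : ∀ i, 0 < g i := by
        intro i
        by_cases hi : α i = 1
        · simp [hg, hi]
        · have := hx i; rw [cIntP_ne_one hi] at this
          simp only [hg, if_neg hi, lt_min_iff]
          exact ⟨by linarith [this.1], by linarith [this.2]⟩
      refine ⟨Finset.univ.inf' (Finset.univ_nonempty) g, ?_, ?_⟩
      · rw [Finset.lt_inf'_iff]; exact fun i _ => hgpos i
      · intro y hy hd
        rw [span_refCell] at hy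
        intro i
        by_cases hi : α i = 1
        · rw [hi, IccP_one]; exact hy i hi
        · have hgi : dist y x < g i :=
            lt_of_lt_of_le hd (Finset.inf'_le _ (Finset.mem_univ i))
          have hco := lt_of_le_of_lt (coord_abs_sub_le y x i) hgi
          rw [hg] at hco; simp only [if_neg hi, lt_min_iff] at hco
          obtain ⟨h1, h2⟩ := hco
          rw [abs_lt] at h1 h2
          exact ⟨by linarith [h1.1], by linarith [h2.2]⟩
    · refine ⟨1, one_pos, ?_⟩
      intro y _ _ i
      exact absurd ⟨i⟩ hn

/-- The center of a reference cell. -/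
lemma center_mem_RintP {n : ℕ} (α : Fin n → Fin 3) :
    (WithLp.toLp 2 (fun i => vv (α i) / 2) : Vn n) ∈ RintP n α :=
  fun i => half_mem_cIntP (α i)

lemma RintP_nonempty {n : ℕ} (α : Fin n → Fin 3) : (RintP n α).Nonempty :=
  ⟨_, center_mem_RintP α⟩

lemma RintP_subset_refCell {n : ℕ} (α : Fin n → Fin 3) : RintP n α ⊆ refCell n α :=
  fun _ hy i => cIntP_subset_IccP (α i) (hy i)

lemma isClosed_refCell {n : ℕ} (α : Fin n → Fin 3) : IsClosed (refCell n α) := by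
  have : refCell n α = ⋂ i, (fun y : Vn n => y i) ⁻¹'
      (Set.Icc (min 0 (vv (α i))) (max 0 (vv (α i)))) := by
    ext y; simp [mem_refCell]
  rw [this]
  refine isClosed_iInter (fun i => IsClosed.preimage ?_ isClosed_Icc)
  exact (continuous_apply i).comp (PiLp.continuous_ofLp (p := 2) (β := fun _ : Fin n => ℝ))

lemma isCompact_refCell {n : ℕ} (α : Fin n → Fin 3) : IsCompact (refCell n α) := by
  apply Metric.isCompact_of_isClosed_isBounded (isClosed_refCell α)
  apply (Metric.isBounded_closedBall (x := (0 : Vn n)) (r := Real.sqrt n)).subset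
  intro y hy
  rw [Metric.mem_closedBall, dist_zero_right, EuclideanSpace.norm_eq]
  apply Real.sqrt_le_sqrt
  calc ∑ i, ‖y i‖ ^ 2 ≤ ∑ _i : Fin n, (1:ℝ) := by
        apply Finset.sum_le_sum
        intro i _
        have := abs_le_one_of_mem_IccP (hy i)
        calc ‖y i‖ ^ 2 = |y i| ^ 2 := by rw [Real.norm_eq_abs]
        _ ≤ 1 := by nlinarith [abs_nonneg (y i)]
  _ = (n : ℝ) := by simp

lemma closure_RintP {n : ℕ} (α : Fin n → Fin 3) :
    closure (RintP n α) = refCell n α := by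
  apply le_antisymm
  · rw [← (isClosed_refCell α).closure_eq]
    exact closure_mono (RintP_subset_refCell α)
  · intro y hy
    rw [Metric.mem_closure_iff]
    intro ε hε
    set m : Vn n := WithLp.toLp 2 (fun i => vv (α i) / 2) with hm
    by_cases hD : m = y
    · exact ⟨m, center_mem_RintP α, by rw [hD]; simpa using hε⟩
    · have hDpos : 0 < dist m y := dist_pos.2 hD
      set t : ℝ := min (1/2) (ε / (2 * dist m y)) with ht
      have ht0 : 0 < t := lt_min (by norm_num) (by positivity)
      have ht1 : t < 1 := lt_of_le_of_lt (min_le_left _ _) (by norm_num)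
      refine ⟨y + t • (m - y), ?_, ?_⟩
      · intro i
        have happ : (y + t • (m - y)) i = y i + t * (m i - y i) := rfl
        by_cases hi : α i = 1
        · have hyi : y i = 0 := by have := hy i; rwa [hi, IccP_one] at this
          have hmi : m i = 0 := by rw [hm]; show vv (α i) / 2 = 0; rw [hi]; norm_num
          rw [hi, cIntP_one]
          show (y + t • (m - y)) i = 0
          rw [happ, hyi, hmi]; ring
        · rw [cIntP_ne_one hi]
          have hyi := hy i
          have hmi : m i = (min 0 (vv (α i)) + max 0 (vv (α i))) / 2 := by
            show vv (α i) / 2 = _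
            rcases fin3_ne_one hi with h | h <;> rw [h] <;> norm_num [vv_two']
          have hlth : min 0 (vv (α i)) < max 0 (vv (α i)) := by
            rcases fin3_ne_one hi with h | h <;> rw [h] <;> norm_num [vv_two']
          rw [happ]
          constructor
          · nlinarith [hyi.1, hyi.2]
          · nlinarith [hyi.1, hyi.2]
      · have : dist (y + t • (m - y)) y = t * dist m y := by
          rw [dist_eq_norm]
          have h1 : y + t • (m - y) - y = t • (m - y) := by abel
          rw [h1, norm_smul, Real.norm_eq_abs, abs_of_pos ht0, dist_eq_norm]
        rw [dist_comm, this]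
        calc t * dist m y ≤ (ε / (2 * dist m y)) * dist m y :=
              mul_le_mul_of_nonneg_right (min_le_right _ _) dist_nonneg
        _ = ε / 2 := by field_simp
        _ < ε := by linarith

lemma refCell_eq_closure_cellInt {n : ℕ} (α : Fin n → Fin 3) :
    refCell n α = closure (cellInt (refCell n α)) := by
  rw [cellInt_refCell, closure_RintP]

/-- A degenerate reference cell is the origin. -/
lemma refCell_all_one {n : ℕ} {α : Fin n → Fin 3} (h : ∀ i, α i = 1) :
    refCell n α = {0} := by
  ext y
  constructor
  · intro hy
    have hz : ∀ i, y i = 0 := by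
      intro i; have := hy i; rwa [h i, IccP_one] at this
    have := sum_single' y
    rw [Set.mem_singleton_iff, this]
    apply Finset.sum_eq_zero
    intro i _
    rw [hz i]
    ext j; simp [EuclideanSpace.single_apply]
  · rintro rfl; exact zero_mem_refCell α

end SystemLimitAuxC
section SystemLimitAuxD

/-- A similarity is an affine equivalence scaling distances. -/
lemma similarity_affine_s9 {n : ℕ} {f : Vn n → Vn n} (hf : IsSimilarity f) :
    ∃ (s : ℝ) (e : Vn n ≃ᵃ[ℝ] Vn n), 0 < s ∧ (∀ x, e x = f x) ∧
      ∀ x y, dist (e x) (e y) = s * dist x y := by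
  obtain ⟨r, hr, hd⟩ := hf
  set g : Vn n → Vn n := fun x => r⁻¹ • (f x - f 0) with hg
  have hgiso : Isometry g := by
    apply Isometry.of_dist_eq
    intro x y
    have h1 : g x - g y = r⁻¹ • (f x - f y) := by
      rw [hg]; show r⁻¹ • (f x - f 0) - r⁻¹ • (f y - f 0) = _
      rw [← smul_sub]; congr 1; abel
    calc dist (g x) (g y) = ‖g x - g y‖ := dist_eq_norm _ _
    _ = r⁻¹ * ‖f x - f y‖ := by
        rw [h1, norm_smul, Real.norm_eq_abs, abs_of_pos (inv_pos.2 hr)]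
    _ = r⁻¹ * (r * dist x y) := by rw [← dist_eq_norm, hd x y]
    _ = dist x y := by field_simp
  set gA := hgiso.affineIsometryOfStrictConvexSpace with hgA
  have hgAc : ∀ x, gA x = g x := fun x => rfl
  have h1 : ∀ w : Vn n, gA.toAffineMap.linear w = gA w - gA 0 := by
    intro w
    have h := gA.toAffineMap.map_vadd 0 w
    simp only [vadd_eq_add, add_zero, AffineIsometry.coe_toAffineMap] at h
    rw [h]; abel
  have hL : Function.Bijective gA.toAffineMap.linear := by
    have hinj : Function.Injective gA.toAffineMap.linear := by
      intro u v huv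
      have h2 : gA u - gA 0 = gA v - gA 0 := by rw [← h1, ← h1, huv]
      have h3 : gA u = gA v := by
        have := sub_left_injective.eq_iff.1 h2; exact this
      have := hgiso.injective
      have h4 : g u = g v := by rw [← hgAc, ← hgAc, h3]
      exact this h4
    exact ⟨hinj, (LinearMap.injective_iff_surjective).1 hinj⟩
  set L := LinearEquiv.ofBijective gA.toAffineMap.linear hL with hLdef
  set L' : Vn n ≃ₗ[ℝ] Vn n := L.trans
    (LinearEquiv.smulOfNeZero ℝ (Vn n) r (ne_of_gt hr)) with hL'
  have hkey : ∀ x : Vn n, f x = L' (x - 0) + f 0 := by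
    intro x
    have hh1 : (L' (x - 0) : Vn n) = r • (gA.toAffineMap.linear (x - 0)) := rfl
    rw [hh1, h1 (x - 0), hgAc, hgAc]
    have hg0 : g 0 = 0 := by rw [hg]; simp
    rw [hg0, sub_zero, sub_zero, hg]
    rw [smul_smul, mul_inv_cancel₀ (ne_of_gt hr), one_smul]
    abel
  refine ⟨r, AffineEquiv.mk' f L' 0 (by
      intro p
      rw [hkey p]
      simp [vsub_eq_sub, vadd_eq_add]), hr, fun x => rfl, ?_⟩
  intro x y
  show dist (f x) (f y) = r * dist x y
  exact hd x y

variable {n : ℕ} {e : Vn n ≃ᵃ[ℝ] Vn n} {s : ℝ}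

/-- Distance scaling facts for an affine similarity equivalence. -/
lemma sim_symm_dist (hs : 0 < s) (hd : ∀ x y, dist (e x) (e y) = s * dist x y)
    (u v : Vn n) : dist (e.symm u) (e.symm v) = s⁻¹ * dist u v := by
  have := hd (e.symm u) (e.symm v)
  rw [e.apply_symm_apply, e.apply_symm_apply] at this
  field_simp [this]
  rw [this]; ring

lemma sim_continuous (hs : 0 < s) (hd : ∀ x y, dist (e x) (e y) = s * dist x y) :
    Continuous (⇑e) := by
  apply LipschitzWith.continuous (K := s.toNNReal)
  apply LipschitzWith.of_dist_le_mul
  intro x y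
  rw [hd, Real.coe_toNNReal s hs.le]

lemma sim_symm_continuous (hs : 0 < s) (hd : ∀ x y, dist (e x) (e y) = s * dist x y) :
    Continuous (⇑e.symm) := by
  apply LipschitzWith.continuous (K := s⁻¹.toNNReal)
  apply LipschitzWith.of_dist_le_mul
  intro x y
  rw [sim_symm_dist hs hd, Real.coe_toNNReal _ (inv_pos.2 hs).le]

lemma sim_image_image (S : Set (Vn n)) : e.symm '' (⇑e '' S) = S := by
  rw [← Set.image_comp]
  simp [Set.image_congr' (fun x => e.symm_apply_apply x)]

lemma sim_span_image (S : Set (Vn n)) :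
    (affineSpan ℝ (⇑e '' S) : Set (Vn n)) = ⇑e '' (affineSpan ℝ S : Set (Vn n)) := by
  apply Set.eq_of_subset_of_subset
  · intro z hz
    have hle : affineSpan ℝ (⇑e '' S) ≤ (affineSpan ℝ S).map e.toAffineMap := by
      apply affineSpan_le.2
      rintro _ ⟨w, hw, rfl⟩
      exact AffineSubspace.mem_map.2 ⟨w, subset_affineSpan ℝ S hw, rfl⟩
    rcases AffineSubspace.mem_map.1 (hle hz) with ⟨w, hw, hwz⟩
    exact ⟨w, hw, hwz⟩
  · rintro _ ⟨w, hw, rfl⟩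
    have hle : affineSpan ℝ S ≤ (affineSpan ℝ (⇑e '' S)).map e.symm.toAffineMap := by
      apply affineSpan_le.2
      intro u hu
      exact AffineSubspace.mem_map.2
        ⟨e u, subset_affineSpan ℝ _ ⟨u, hu, rfl⟩, e.symm_apply_apply u⟩
    rcases AffineSubspace.mem_map.1 (hle hw) with ⟨u, hu, huw⟩
    have heq : e w = u := by
      have h0 : (e.symm.toAffineMap : Vn n → Vn n) u = e.symm u := rfl
      rw [h0] at huw
      rw [← huw, e.apply_symm_apply]
    rw [heq]
    exact hu

lemma sim_image_closure (hs : 0 < s) (hd : ∀ x y, dist (e x) (e y) = s * dist x y)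
    (S : Set (Vn n)) : closure (⇑e '' S) = ⇑e '' closure S := by
  apply le_antisymm
  · intro z hz
    refine ⟨e.symm z, ?_, e.apply_symm_apply z⟩
    have h1 : e.symm '' closure (⇑e '' S) ⊆ closure (e.symm '' (⇑e '' S)) :=
      image_closure_subset_closure_image (sim_symm_continuous hs hd)
    have := h1 ⟨z, hz, rfl⟩
    rwa [sim_image_image] at this
  · exact image_closure_subset_closure_image (sim_continuous hs hd)

lemma sim_isOpenMap (hs : 0 < s) (hd : ∀ x y, dist (e x) (e y) = s * dist x y)
    {U : Set (Vn n)} (hU : IsOpen U) : IsOpen (⇑e '' U) := by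
  have h1 : ⇑e '' U = ⇑e.symm ⁻¹' U := by
    ext z
    constructor
    · rintro ⟨u, hu, rfl⟩; simpa [e.symm_apply_apply] using hu
    · intro hz; exact ⟨e.symm z, hz, e.apply_symm_apply z⟩
  rw [h1]
  exact hU.preimage (sim_symm_continuous hs hd)

lemma sim_cellInt_image_subset (hs : 0 < s)
    (hd : ∀ x y, dist (e x) (e y) = s * dist x y) (S : Set (Vn n)) :
    ⇑e '' cellInt S ⊆ cellInt (⇑e '' S) := by
  rintro _ ⟨x, ⟨hxS, ε, hε, hb⟩, rfl⟩
  refine ⟨⟨x, hxS, rfl⟩, s * ε, by positivity, ?_⟩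
  intro y hy hdist
  rw [sim_span_image] at hy
  obtain ⟨w, hw, rfl⟩ := hy
  rw [hd w x] at hdist
  have : dist w x < ε := (mul_lt_mul_iff_right₀ hs).1 hdist
  exact ⟨w, hb w hw this, rfl⟩

lemma sim_cellInt_image (hs : 0 < s)
    (hd : ∀ x y, dist (e x) (e y) = s * dist x y) (S : Set (Vn n)) :
    cellInt (⇑e '' S) = ⇑e '' cellInt S := by
  apply le_antisymm
  · intro z hz
    have hsymm := sim_cellInt_image_subset (e := e.symm) (inv_pos.2 hs)
      (sim_symm_dist hs hd) (⇑e '' S)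
    have h3 : e.symm z ∈ cellInt S := by
      have := hsymm ⟨z, hz, rfl⟩
      rwa [sim_image_image] at this
    exact ⟨e.symm z, h3, e.apply_symm_apply z⟩
  · exact sim_cellInt_image_subset hs hd S

lemma sim_infDist_le (hs : 0 < s) (hd : ∀ x y, dist (e x) (e y) = s * dist x y)
    (x : Vn n) (T : Set (Vn n)) :
    Metric.infDist (e x) (⇑e '' T) ≤ s * Metric.infDist x T := by
  rcases T.eq_empty_or_nonempty with rfl | hT
  · simp
  · apply le_of_forall_pos_le_add
    intro ε hε
    obtain ⟨t, htT, htd⟩ := (Metric.infDist_lt_iff hT).1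
      (lt_add_of_pos_right (Metric.infDist x T) (div_pos hε hs))
    calc Metric.infDist (e x) (⇑e '' T) ≤ dist (e x) (e t) :=
          Metric.infDist_le_dist_of_mem ⟨t, htT, rfl⟩
    _ = s * dist x t := hd x t
    _ ≤ s * (Metric.infDist x T + ε / s) := by
          apply mul_le_mul_of_nonneg_left htd.le hs.le
    _ = s * Metric.infDist x T + ε := by field_simp

end SystemLimitAuxD
section SystemLimitAuxE

local notation "vv" => (![(-1:ℝ), 0, 1] : Fin 3 → ℝ)

/-- The key ball lemma: near a point of the relative interior of a reference cell, every
point lies in the relative interior of a reference cell containing the original one. -/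
lemma ball_refCell {n : ℕ} {α : Fin n → Fin 3} {p : Vn n} (hp : p ∈ RintP n α)
    {r : ℝ} (h1 : ∀ i, r ≤ 1 - |p i|) (h2 : ∀ i, α i ≠ 1 → r ≤ |p i|)
    {z : Vn n} (hz : dist z p < r) :
    ∃ β : Fin n → Fin 3, refCell n α ⊆ refCell n β ∧ z ∈ RintP n β := by
  refine ⟨fun i => betaSel (z i), ?_, ?_⟩
  · intro y hy i
    by_cases hi : α i = 1
    · exact IccP_subset_of_one hi (hy i)
    · have hsel : betaSel (z i) = α i := by
        apply betaSel_eq hi (hp i)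
        have := coord_abs_sub_le z p i
        linarith [h2 i hi]
      show y i ∈ Set.Icc (min 0 (vv (betaSel (z i)))) (max 0 (vv (betaSel (z i))))
      rw [hsel]
      exact hy i
  · intro i
    apply mem_cIntP_betaSel
    have hzi := coord_abs_sub_le z p i
    have hr1 := h1 i
    calc |z i| = |p i + (z i - p i)| := by congr 1; ring
    _ ≤ |p i| + |z i - p i| := abs_add_le _ _
    _ < 1 := by linarith

/-- Existence of an admissible radius at each interior point. -/
lemma exists_radius {n : ℕ} {α : Fin n → Fin 3} {p : Vn n} (hp : p ∈ RintP n α) :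
    ∃ r : ℝ, 0 < r ∧ (∀ i, r ≤ 1 - |p i|) ∧ (∀ i, α i ≠ 1 → r ≤ |p i|) := by
  by_cases hn : Nonempty (Fin n)
  · set g : Fin n → ℝ := fun i => if α i = 1 then 1 else min |p i| (1 - |p i|) with hg
    have hb : ∀ i, α i ≠ 1 → (0 < |p i| ∧ |p i| < 1) :=
      fun i hi => abs_bounds_of_mem_cIntP hi (hp i)
    refine ⟨Finset.univ.inf' Finset.univ_nonempty g, ?_, ?_, ?_⟩
    · rw [Finset.lt_inf'_iff]
      intro i _
      by_cases hi : α i = 1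
      · simp [hg, hi]
      · have := hb i hi
        simp only [hg, if_neg hi, lt_min_iff]
        exact ⟨this.1, by linarith [this.2]⟩
    · intro i
      have hle := Finset.inf'_le g (Finset.mem_univ i)
      by_cases hi : α i = 1
      · have hp0 : p i = 0 := by
          have := hp i; rwa [hi, cIntP_one] at this
        rw [hp0]
        simp only [hg, if_pos hi] at hle
        simp only [abs_zero, sub_zero]; exact hle
      · simp only [hg, if_neg hi] at hle
        exact hle.trans (min_le_right _ _)
    · intro i hi
      have hle := Finset.inf'_le g (Finset.mem_univ i)
      simp only [hg, if_neg hi] at hle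
      exact hle.trans (min_le_left _ _)
  · exact ⟨1, one_pos, fun i => absurd ⟨i⟩ hn, fun i _ => absurd ⟨i⟩ hn⟩

lemma cellBry_refCell {n : ℕ} (α : Fin n → Fin 3) :
    cellBry (refCell n α) = refCell n α \ RintP n α := by
  rw [cellBry, cellInt_refCell]

/-- Distance from an interior point to the boundary faces. -/
lemma bry_dist_bounds {n : ℕ} {α : Fin n → Fin 3} {p : Vn n} (hp : p ∈ RintP n α)
    {i : Fin n} (hi : α i ≠ 1) :
    Metric.infDist p (cellBry (refCell n α)) ≤ |p i| ∧
      Metric.infDist p (cellBry (refCell n α)) ≤ 1 - |p i| := by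
  rw [cellBry_refCell]
  constructor
  · set q : Vn n := WithLp.toLp 2 (Function.update p i 0) with hqdef
    have hq : q ∈ refCell n α \ RintP n α := by
      constructor
      · intro j
        by_cases hj : j = i
        · subst hj; rw [hqdef, WithLp.ofLp_toLp, Function.update_self]; exact zero_mem_IccP _
        · rw [hqdef, WithLp.ofLp_toLp, Function.update_of_ne hj]
          exact cIntP_subset_IccP _ (hp j)
      · intro hmem
        have := hmem i
        rw [hqdef, WithLp.ofLp_toLp, Function.update_self] at this
        exact zero_not_mem_cIntP hi this
    have := Metric.infDist_le_dist_of_mem (x := p) hq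
    rwa [hqdef, upd_dist, sub_zero] at this
  · set q : Vn n := WithLp.toLp 2 (Function.update p i (vv (α i))) with hqdef
    have hq : q ∈ refCell n α \ RintP n α := by
      constructor
      · intro j
        by_cases hj : j = i
        · subst hj; rw [hqdef, WithLp.ofLp_toLp, Function.update_self]; exact vv_mem_IccP _
        · rw [hqdef, WithLp.ofLp_toLp, Function.update_of_ne hj]
          exact cIntP_subset_IccP _ (hp j)
      · intro hmem
        have := hmem i
        rw [hqdef, WithLp.ofLp_toLp, Function.update_self] at this
        exact vv_not_mem_cIntP hi this
    have := Metric.infDist_le_dist_of_mem (x := p) hq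
    rwa [hqdef, upd_dist, abs_sub_vv_of_mem_cIntP hi (hp i)] at this

/-- The boundary distance provides an admissible radius (nondegenerate cells). -/
lemma bry_radius_bounds {n : ℕ} {α : Fin n → Fin 3} {p : Vn n} (hp : p ∈ RintP n α)
    {j : Fin n} (hj : α j ≠ 1) :
    (∀ i, Metric.infDist p (cellBry (refCell n α)) ≤ 1 - |p i|) ∧
      (∀ i, α i ≠ 1 → Metric.infDist p (cellBry (refCell n α)) ≤ |p i|) := by
  have hhalf : Metric.infDist p (cellBry (refCell n α)) ≤ 1/2 := by
    obtain ⟨hb1, hb2⟩ := bry_dist_bounds hp hj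
    linarith
  constructor
  · intro i
    by_cases hi : α i = 1
    · have hp0 : p i = 0 := by
        have := hp i; rwa [hi, cIntP_one] at this
      rw [hp0]
      simpa using hhalf.trans (by norm_num)
    · exact (bry_dist_bounds hp hi).2
  · intro i hi
    exact (bry_dist_bounds hp hi).1

/-- A cell all whose indices are degenerate has dimension `0`. -/
lemma cellDim_point {n : ℕ} {e : Vn n ≃ᵃ[ℝ] Vn n} {α : Fin n → Fin 3}
    (hall : ∀ i, α i = 1) : cellDim (⇑e '' refCell n α) = 0 := by
  rw [refCell_all_one hall, Set.image_singleton]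
  unfold cellDim
  rw [direction_affineSpan, vectorSpan_singleton]
  exact finrank_bot ℝ (Vn n)

end SystemLimitAuxE
section SystemLimitAuxF

variable {n : ℕ} {ι : Type} {Kα : ι → Set (Set (Vn n))}

lemma cellInt_sub {S : Set (Vn n)} : cellInt S ⊆ S := fun _ h => h.1

/-- Chart representation of a cell of the system. -/
lemma chart_rep (hS : IsChartSystem Kα) {A : Set (Vn n)} (hA : A ∈ ⋃ a, Kα a) :
    ∃ (a : ι) (e : Vn n ≃ᵃ[ℝ] Vn n) (s : ℝ) (α : Fin n → Fin 3), 0 < s ∧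
      (∀ x y, dist (e x) (e y) = s * dist x y) ∧ A = ⇑e '' refCell n α ∧
      (∀ β, ⇑e '' refCell n β ∈ Kα a) := by
  obtain ⟨a, haA⟩ := Set.mem_iUnion.1 hA
  obtain ⟨f, hf, hKa⟩ := hS.1 a
  obtain ⟨s, e, hs, he, hd⟩ := similarity_affine_s9 hf
  have himg : ∀ β, ⇑e '' refCell n β = f '' refCell n β := by
    intro β; exact congrArg (fun g => g '' refCell n β) (funext he)
  rw [hKa] at haA
  obtain ⟨α, hα⟩ := haA
  refine ⟨a, e, s, α, hs, hd, by rw [hα, ← himg], fun β => ?_⟩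
  rw [hKa]
  exact ⟨β, (himg β)⟩

/-- Basic facts for each cell of the system. -/
lemma cell_facts (hS : IsChartSystem Kα) {A : Set (Vn n)} (hA : A ∈ ⋃ a, Kα a) :
    IsCompact A ∧ IsClosed A ∧ A.Nonempty ∧ closure (cellInt A) = A ∧
      (cellInt A).Nonempty := by
  obtain ⟨a, e, s, α, hs, hd, hrep, hch⟩ := chart_rep hS hA
  have hcpt : IsCompact A := by
    rw [hrep]; exact (isCompact_refCell α).image (sim_continuous hs hd)
  have hint : cellInt A = ⇑e '' RintP n α := by
    rw [hrep, sim_cellInt_image hs hd, cellInt_refCell]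
  refine ⟨hcpt, hcpt.isClosed, ?_, ?_, ?_⟩
  · rw [hrep]; exact ⟨e 0, ⟨0, zero_mem_refCell α, rfl⟩⟩
  · rw [hint, sim_image_closure hs hd, closure_RintP, hrep]
  · rw [hint]; exact (RintP_nonempty α).image _

lemma subset_of_cellInt_subset (hS : IsChartSystem Kα) {A B : Set (Vn n)}
    (hA : A ∈ ⋃ a, Kα a) (hB : B ∈ ⋃ a, Kα a) (h : cellInt A ⊆ cellInt B) : A ⊆ B := by
  have h1 := (cell_facts hS hA).2.2.2.1
  have h2 := (cell_facts hS hB).2.2.2.1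
  rw [← h1, ← h2]
  exact closure_mono h

/-- Every cell of the system has its interior inside the interior of a maximal cell. -/
lemma maxcell (hS : IsChartSystem Kα) {A : Set (Vn n)} (hA : A ∈ ⋃ a, Kα a) :
    ∃ B ∈ systemLimit Kα, cellInt A ⊆ cellInt B := by
  obtain ⟨x, hx⟩ := (cell_facts hS hA).2.2.2.2
  have hxin : x ∈ ⋃ a, ⋃₀ (Kα a) := by
    obtain ⟨a, haA⟩ := Set.mem_iUnion.1 hA
    exact Set.mem_iUnion.2 ⟨a, A, haA, cellInt_sub hx⟩
  obtain ⟨U, hUopen, hxU, S, hSfin, hSsub, hface⟩ := hS.2.2 x hxin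
  set T := {B ∈ S | cellInt A ⊆ cellInt B} with hT
  have hTfin : T.Finite := hSfin.subset (Set.sep_subset _ _)
  have hTne : T.Nonempty := by
    obtain ⟨B0, hB0S, hB0⟩ := hface A hA ⟨x, cellInt_sub hx, hxU, hxin⟩
    exact ⟨B0, hB0S, hB0⟩
  obtain ⟨B, hBT, hBmax⟩ := Set.Finite.exists_maximalFor cellInt T hTfin hTne
  have hBsys : B ∈ ⋃ a, Kα a := hSsub hBT.1
  have hdom : ∀ B' ∈ T, cellInt B' ⊆ cellInt B := by
    intro B' hB'
    rcases hS.2.1 B' (hSsub hB'.1) B hBsys ⟨x, hB'.2 hx, hBT.2 hx⟩ with h | h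
    · exact h
    · exact hBmax hB' h
  refine ⟨B, ⟨hBsys, ?_⟩, hBT.2⟩
  intro C hC hint
  obtain ⟨w, hw1, hw2⟩ := hint
  rcases hS.2.1 C hC B hBsys ⟨w, hw2, hw1⟩ with h | h
  · exact h
  · have hxC : x ∈ cellInt C := h (hBT.2 hx)
    obtain ⟨B', hB'S, hCB'⟩ := hface C hC ⟨x, cellInt_sub hxC, hxU, hxin⟩
    have hB'T : B' ∈ T := ⟨hB'S, (hBT.2.trans h).trans hCB'⟩
    exact hCB'.trans (hdom B' hB'T)

/-- Two maximal cells with intersecting interiors coincide. -/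
lemma limit_unique (hS : IsChartSystem Kα) {A B : Set (Vn n)}
    (hA : A ∈ systemLimit Kα) (hB : B ∈ systemLimit Kα)
    (hint : (cellInt A ∩ cellInt B).Nonempty) : A = B := by
  obtain ⟨x, hx1, hx2⟩ := hint
  have e1 : cellInt A = cellInt B :=
    le_antisymm (hB.2 A hA.1 ⟨x, hx2, hx1⟩) (hA.2 B hB.1 ⟨x, hx1, hx2⟩)
  have h1 := (cell_facts hS hA.1).2.2.2.1
  have h2 := (cell_facts hS hB.1).2.2.2.1
  rw [← h1, ← h2, e1]

/-- The fundamental ball lemma for the limit complex. -/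
lemma nbhd_ball (hS : IsChartSystem Kα) {a : ι} {e : Vn n ≃ᵃ[ℝ] Vn n} {s : ℝ}
    {α : Fin n → Fin 3} (hs : 0 < s) (hd : ∀ x y, dist (e x) (e y) = s * dist x y)
    (hch : ∀ β, ⇑e '' refCell n β ∈ Kα a) {p : Vn n} (hp : p ∈ RintP n α)
    {r : ℝ} (h1 : ∀ i, r ≤ 1 - |p i|) (h2 : ∀ i, α i ≠ 1 → r ≤ |p i|) :
    ∃ D : (Fin n → Fin 3) → Set (Vn n), (∀ β, D β ∈ systemLimit Kα) ∧
      ∀ z ∈ Metric.ball (e p) (s * r), ∃ β, z ∈ cellInt (D β) ∧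
        ⇑e '' refCell n α ⊆ D β := by
  have hmem : ∀ β, ⇑e '' refCell n β ∈ ⋃ b, Kα b :=
    fun β => Set.mem_iUnion.2 ⟨a, hch β⟩
  choose D hD hDint using fun β => maxcell hS (hmem β)
  refine ⟨D, hD, ?_⟩
  intro z hzball
  have hz : dist (e.symm z) p < r := by
    have h0 : dist (e.symm z) p = s⁻¹ * dist z (e p) := by
      have := sim_symm_dist hs hd z (e p)
      rwa [e.symm_apply_apply] at this
    rw [h0]
    rw [Metric.mem_ball] at hzball
    calc s⁻¹ * dist z (e p) < s⁻¹ * (s * r) := by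
          apply mul_lt_mul_of_pos_left hzball (inv_pos.2 hs)
    _ = r := by field_simp
  obtain ⟨β, hsub, hzmem⟩ := ball_refCell hp h1 h2 hz
  have hzint : z ∈ cellInt (⇑e '' refCell n β) := by
    rw [sim_cellInt_image hs hd, cellInt_refCell]
    exact ⟨e.symm z, hzmem, e.apply_symm_apply z⟩
  refine ⟨β, hDint β hzint, ?_⟩
  calc ⇑e '' refCell n α ⊆ ⇑e '' refCell n β := Set.image_mono hsub
  _ ⊆ D β := subset_of_cellInt_subset hS (hmem β) (hD β).1 (hDint β)

end SystemLimitAuxF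
/-- **Properties of the limit of a system of `n`-charts.** -/
theorem system_limit_properties (n : ℕ) :
    ∃ κ : ℝ, 1 ≤ κ ∧
    ∀ (ι : Type) (Kα : ι → Set (Set (Vn n))), IsChartSystem Kα →
      IsComplex (systemLimit Kα) ∧
      ⋃₀ systemLimit Kα = ⋃ a, ⋃₀ (Kα a) ∧
      (∀ A ∈ ⋃ a, Kα a, ∃ B ∈ systemLimit Kα, cellInt A ⊆ cellInt B) ∧
      (∀ A ∈ systemLimit Kα, IsOpen (cellNbhd (systemLimit Kα) A)) ∧
      (∀ A ∈ systemLimit Kα, 1 ≤ cellDim A →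
        {x : Vn n | Metric.infDist x A < κ⁻¹ * Metric.infDist x (cellBry A)} ⊆
          cellNbhd (systemLimit Kα) A) ∧
      (∀ A ∈ systemLimit Kα, {B ∈ systemLimit Kα | A ⊆ B}.Finite ∧
        {B ∈ systemLimit Kα | A ⊆ B}.ncard ≤ 3 ^ n) := by
  refine ⟨2, one_le_two, ?_⟩
  intro ι Kα hS
  -- (3) every cell of the system sits below a maximal cell
  have h3 : ∀ A ∈ ⋃ a, Kα a, ∃ B ∈ systemLimit Kα, cellInt A ⊆ cellInt B :=
    fun A hA => maxcell hS hA
  -- (2) the limit covers the whole system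
  have h2 : ⋃₀ systemLimit Kα = ⋃ a, ⋃₀ (Kα a) := by
    apply Set.eq_of_subset_of_subset
    · rintro x ⟨A, hA, hxA⟩
      obtain ⟨a, haA⟩ := Set.mem_iUnion.1 hA.1
      exact Set.mem_iUnion.2 ⟨a, A, haA, hxA⟩
    · rintro x hx
      obtain ⟨a, hxa⟩ := Set.mem_iUnion.1 hx
      obtain ⟨A, hAa, hxA⟩ := hxa
      have hA : A ∈ ⋃ a, Kα a := Set.mem_iUnion.2 ⟨a, hAa⟩
      obtain ⟨B, hB, hint⟩ := h3 A hA
      exact ⟨B, hB, subset_of_cellInt_subset hS hA hB.1 hint hxA⟩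
  -- (4) the cell neighbourhoods are open
  have h4 : ∀ A ∈ systemLimit Kα, IsOpen (cellNbhd (systemLimit Kα) A) := by
    intro A hA
    rw [Metric.isOpen_iff]
    intro x hx
    simp only [cellNbhd, Set.mem_iUnion, Set.mem_setOf_eq, exists_prop] at hx
    obtain ⟨B, ⟨hBK, hAB⟩, hxB⟩ := hx
    obtain ⟨a, e, s, α, hs, hd, hrep, hch⟩ := chart_rep hS hBK.1
    have hint : cellInt B = ⇑e '' RintP n α := by
      rw [hrep, sim_cellInt_image hs hd, cellInt_refCell]
    rw [hint] at hxB
    obtain ⟨p, hp, hpe⟩ := hxB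
    obtain ⟨r, hr, h1b, h2b⟩ := exists_radius hp
    obtain ⟨D, hDK, hball⟩ := nbhd_ball hS hs hd hch hp h1b h2b
    rw [hpe] at hball
    refine ⟨s * r, by positivity, ?_⟩
    intro z hz
    obtain ⟨β, hzD, hsubD⟩ := hball z hz
    have hADβ : A ⊆ D β := hAB.trans (by rw [hrep]; exact hsubD)
    exact Set.mem_biUnion ⟨hDK β, hADβ⟩ hzD
  -- (5) the quantitative neighbourhood property, with κ = 2
  have h5 : ∀ A ∈ systemLimit Kα, 1 ≤ cellDim A →
      {x : Vn n | Metric.infDist x A < (2:ℝ)⁻¹ * Metric.infDist x (cellBry A)} ⊆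
        cellNbhd (systemLimit Kα) A := by
    intro A hA hdim x hx
    obtain ⟨a, e, s, α, hs, hd, hrep, hch⟩ := chart_rep hS hA.1
    have hint : cellInt A = ⇑e '' RintP n α := by
      rw [hrep, sim_cellInt_image hs hd, cellInt_refCell]
    have hj : ∃ j, α j ≠ 1 := by
      by_contra hcon
      push_neg at hcon
      have h0 : cellDim A = 0 := by rw [hrep]; exact cellDim_point hcon
      omega
    obtain ⟨j, hjne⟩ := hj
    have hcf := cell_facts hS hA.1
    obtain ⟨p, hpA, hpd⟩ := hcf.1.exists_infDist_eq_dist hcf.2.2.1 x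
    have hxlt : Metric.infDist x A < 2⁻¹ * Metric.infDist x (cellBry A) := hx
    rw [hpd] at hxlt
    have hBrA : cellBry A = ⇑e '' cellBry (refCell n α) := by
      rw [cellBry, cellBry, hrep, sim_cellInt_image hs hd,
        ← Set.image_diff e.injective]
    have hxe : e (e.symm x) = x := e.apply_symm_apply x
    have hpe : e (e.symm p) = p := e.apply_symm_apply p
    have hdist_hat : dist (e.symm x) (e.symm p) = s⁻¹ * dist x p :=
      sim_symm_dist hs hd x p
    have hinf_le : Metric.infDist x (cellBry A)
        ≤ s * Metric.infDist (e.symm x) (cellBry (refCell n α)) := by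
      rw [hBrA]
      have hq := sim_infDist_le hs hd (e.symm x) (cellBry (refCell n α))
      rwa [hxe] at hq
    have hIh : 2 * dist (e.symm x) (e.symm p)
        < Metric.infDist (e.symm x) (cellBry (refCell n α)) := by
      rw [hdist_hat]
      have h2d : 2 * dist x p
          < s * Metric.infDist (e.symm x) (cellBry (refCell n α)) := by linarith
      have e1 : 2 * (s⁻¹ * dist x p) * s = 2 * dist x p := by field_simp
      nlinarith [h2d, hs]
    have htri : Metric.infDist (e.symm x) (cellBry (refCell n α))
        ≤ Metric.infDist (e.symm p) (cellBry (refCell n α))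
          + dist (e.symm x) (e.symm p) := Metric.infDist_le_infDist_add_dist
    have hρgt : dist (e.symm x) (e.symm p)
        < Metric.infDist (e.symm p) (cellBry (refCell n α)) := by linarith
    have hpint : e.symm p ∈ RintP n α := by
      have hpB : p ∉ cellBry A := by
        intro hpBry
        have h0 : Metric.infDist p (cellBry A) = 0 := Metric.infDist_zero_of_mem hpBry
        have htr2 : Metric.infDist x (cellBry A)
            ≤ Metric.infDist p (cellBry A) + dist x p := Metric.infDist_le_infDist_add_dist
        rw [h0, zero_add] at htr2
        linarith [Metric.infDist_nonneg (x := x) (s := cellBry A)]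
      have hpint' : p ∈ cellInt A := by
        by_contra hc
        exact hpB ⟨hpA, hc⟩
      rw [hint] at hpint'
      obtain ⟨q, hq, hqe⟩ := hpint'
      have hqp : q = e.symm p := e.injective (by rw [hqe, hpe])
      rwa [← hqp]
    obtain ⟨hb1, hb2⟩ := bry_radius_bounds hpint hjne
    obtain ⟨D, hDK, hball⟩ := nbhd_ball hS hs hd hch hpint hb1 hb2
    have hxball : x ∈ Metric.ball (e (e.symm p))
        (s * Metric.infDist (e.symm p) (cellBry (refCell n α))) := by
      rw [Metric.mem_ball, ← hxe, hd (e.symm x) (e.symm p)]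
      exact (mul_lt_mul_iff_right₀ hs).2 hρgt
    obtain ⟨β, hxD, hsubD⟩ := hball x hxball
    have hADβ : A ⊆ D β := by rw [hrep]; exact hsubD
    exact Set.mem_biUnion ⟨hDK β, hADβ⟩ hxD
  -- (6) at most `3 ^ n` cells above a maximal cell
  have h6 : ∀ A ∈ systemLimit Kα, {B ∈ systemLimit Kα | A ⊆ B}.Finite ∧
      {B ∈ systemLimit Kα | A ⊆ B}.ncard ≤ 3 ^ n := by
    intro A hA
    obtain ⟨a, e, s, α, hs, hd, hrep, hch⟩ := chart_rep hS hA.1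
    obtain ⟨c, hc⟩ := RintP_nonempty α
    obtain ⟨r, hr, h1b, h2b⟩ := exists_radius hc
    obtain ⟨D, hDK, hball⟩ := nbhd_ball hS hs hd hch hc h1b h2b
    have hsub : {B ∈ systemLimit Kα | A ⊆ B} ⊆ Set.range D := by
      rintro B ⟨hBK, hAB⟩
      have hpA : e c ∈ A := by
        rw [hrep]; exact ⟨c, RintP_subset_refCell α hc, rfl⟩
      have hBcl : closure (cellInt B) = B := (cell_facts hS hBK.1).2.2.2.1
      have hcl : e c ∈ closure (cellInt B) := by rw [hBcl]; exact hAB hpA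
      rw [Metric.mem_closure_iff] at hcl
      obtain ⟨z, hzB, hzd⟩ := hcl (s*r) (by positivity)
      have hzball : z ∈ Metric.ball (e c) (s * r) := by
        rw [Metric.mem_ball, dist_comm]; exact hzd
      obtain ⟨β, hzD, _⟩ := hball z hzball
      exact ⟨β, (limit_unique hS hBK (hDK β) ⟨z, hzB, hzD⟩).symm⟩
    refine ⟨(Set.finite_range D).subset hsub, ?_⟩
    calc {B ∈ systemLimit Kα | A ⊆ B}.ncard ≤ (Set.range D).ncard :=
          Set.ncard_le_ncard hsub (Set.finite_range D)
    _ ≤ Fintype.card (Fin n → Fin 3) := by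
        rw [← Set.image_univ]
        apply le_trans (Set.ncard_image_le Set.finite_univ)
        rw [Set.ncard_univ, Nat.card_eq_fintype_card]
    _ = 3 ^ n := by simp [Fintype.card_fun]
  refine ⟨⟨?_, ?_, ?_, ?_⟩, h2, h3, h4, h5, h6⟩
  -- the limit consists of cells
  · intro A hA
    obtain ⟨a, e, s, α, hs, hd, hrep, hch⟩ := chart_rep hS hA.1
    exact ⟨⇑e, α, ⟨s, hs, hd⟩, hrep⟩
  -- the interiors are disjoint
  · intro A hA B hB hne
    rw [Set.eq_empty_iff_forall_notMem]
    intro x hxm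
    exact hne (limit_unique hS hA hB ⟨x, hxm.1, hxm.2⟩)
  -- local finiteness
  · intro x hx
    obtain ⟨A0, hA0K, hxA0⟩ := hx
    have hxin : x ∈ ⋃ a, ⋃₀ (Kα a) := by
      obtain ⟨a, ha⟩ := Set.mem_iUnion.1 hA0K.1
      exact Set.mem_iUnion.2 ⟨a, A0, ha, hxA0⟩
    obtain ⟨U, hUopen, hxU, S, hSfin, hSsub, hface⟩ := hS.2.2 x hxin
    refine ⟨U, hUopen, hxU, ?_⟩
    apply (hSfin.image (fun B => closure (cellInt B))).subset
    rintro A ⟨hAK, y, hyA, hyU⟩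
    obtain ⟨a, haA⟩ := Set.mem_iUnion.1 hAK.1
    obtain ⟨B, hBS, hintAB⟩ := hface A hAK.1
      ⟨y, hyA, hyU, Set.mem_iUnion.2 ⟨a, A, haA, hyA⟩⟩
    obtain ⟨w, hw⟩ := (cell_facts hS hAK.1).2.2.2.2
    have hBA : cellInt B ⊆ cellInt A := hAK.2 B (hSsub hBS) ⟨w, hw, hintAB hw⟩
    have hABeq : cellInt A = cellInt B := le_antisymm hintAB hBA
    have hAc : A = closure (cellInt B) := by
      rw [← hABeq, (cell_facts hS hAK.1).2.2.2.1]
    exact ⟨B, hBS, hAc.symm⟩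
  -- the neighbourhood condition
  · intro A hA
    exact ⟨cellNbhd (systemLimit Kα) A, h4 A hA,
      fun x hx => Set.mem_biUnion ⟨hA, subset_rfl⟩ hx, fun x hx => hx.1⟩
end Paper
end
end
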